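/- Let μ be a finite signed Borel measure on ℝⁿ of the form μ(A) = ∫_A h(y) dy with h integrable, and let Λ be a finite positive Borel measure on ℝⁿ with full support. Define k(r,r') := ∫ exp(−i (r−r')ᵀ w) dΛ(w). Then ∫∫ k(y,z) dμ(y) dμ(z) = ∫ |ĥ(w)|² dΛ(w), where ĥ is the Fourier transform of h; consequently ∫∫ k dμ⊗dμ = 0 implies μ = 0. -/

import Mathlib

open MeasureTheory Complex FourierTransform Real Filter Function
open scoped RealInnerProductSpace ContDiff

-- Schwartz map from smooth compactly supported function
lemma exists_schwartz_of_compact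
    {V : Type*} [NormedAddCommGroup V] [NormedSpace ℝ V]
    {F : Type*} [NormedAddCommGroup F] [NormedSpace ℝ F]
    {f : V → F} (h1 : ContDiff ℝ ∞ f) (h2 : HasCompactSupport f) :
    ∃ G : SchwartzMap V F, ⇑G = f := by
  refine ⟨⟨f, h1, fun k m => ?_⟩, rfl⟩
  obtain ⟨C, hC⟩ := Continuous.bounded_above_of_compact_support
    (f := fun x => ‖x‖ ^ k * ‖iteratedFDeriv ℝ m f x‖)
    ((continuous_norm.pow k).mul (h1.continuous_iteratedFDeriv (by exact_mod_cast le_top)).norm)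
    ((h2.iteratedFDeriv m).norm.mul_left)
  exact ⟨C, fun x => (le_abs_self _).trans ((Real.norm_eq_abs _) ▸ hC x)⟩

-- injectivity of Fourier transform on L¹
set_option maxHeartbeats 1000000 in
lemma fourier_inj
    {V : Type*} [NormedAddCommGroup V] [InnerProductSpace ℝ V] [FiniteDimensional ℝ V]
    [MeasurableSpace V] [BorelSpace V]
    {f : V → ℂ} (hf : Integrable f volume) (h0 : ∀ ξ, 𝓕 f ξ = 0) :
    f =ᵐ[volume] 0 := by
  apply ae_eq_zero_of_integral_contDiff_smul_eq_zero hf.locallyIntegrable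
  intro g gsm gsupp
  obtain ⟨G, hG⟩ := exists_schwartz_of_compact
    (f := fun x => (g x : ℂ)) (Complex.ofRealCLM.contDiff.comp gsm)
    (show HasCompactSupport ((fun r : ℝ => (r : ℂ)) ∘ g) from gsupp.comp_left (by simp))
  set ψ : SchwartzMap V ℂ := (FourierTransform.fourierCLE ℂ (SchwartzMap V ℂ)).symm G with hψdef
  have hψ : 𝓕 ⇑ψ = ⇑G := by
    have := (FourierTransform.fourierCLE ℂ (SchwartzMap V ℂ)).apply_symm_apply G
    rw [← this, FourierTransform.fourierCLE_apply, SchwartzMap.fourier_coe]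
  have flipeq : ∀ x : V, VectorFourier.fourierIntegral 𝐞 volume ((innerₗ V).flip) f x
      = 𝓕 f x := by
    intro x
    rw [show 𝓕 f x = VectorFourier.fourierIntegral 𝐞 volume (innerₗ V) f x from rfl, VectorFourier.fourierIntegral, VectorFourier.fourierIntegral]
    congr 1 with v
    rw [LinearMap.flip_apply]
    rw [show ((innerₗ V) x) v = ((innerₗ V) v) x from real_inner_comm _ _]
  have flip := VectorFourier.integral_fourierIntegral_smul_eq_flip
    (L := innerₗ V) (μ := volume) (ν := volume)
    Real.continuous_fourierChar continuous_inner ψ.integrable hf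
  have key : ∫ x, (g x : ℂ) * f x = 0 := by
    calc ∫ x, (g x : ℂ) * f x = ∫ x, 𝓕 ⇑ψ x * f x := by rw [hψ, hG]
    _ = ∫ x, ⇑ψ x * 𝓕 f x := by
        exact (by simpa only [smul_eq_mul, flipeq] using flip :
          ∫ ξ, VectorFourier.fourierIntegral 𝐞 volume (innerₗ V) ⇑ψ ξ * f ξ = _)
    _ = 0 := by simp [h0]
  simpa only [Complex.real_smul] using key

set_option maxHeartbeats 1000000 in

set_option maxHeartbeats 1000000 in
theorem bochner_kernel_double_integral
    {n : ℕ} (h : EuclideanSpace ℝ (Fin n) → ℝ)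
    (hmeas : Measurable h) (hint : Integrable h volume)
    (Λ : Measure (EuclideanSpace ℝ (Fin n))) [IsFiniteMeasure Λ]
    (hsupp : ∀ U : Set (EuclideanSpace ℝ (Fin n)), IsOpen U → U.Nonempty → 0 < Λ U) :
    let k : EuclideanSpace ℝ (Fin n) → EuclideanSpace ℝ (Fin n) → ℂ := fun r r' =>
      ∫ w, Complex.exp (-Complex.I * ((inner ℝ (r - r') w : ℝ) : ℂ)) ∂Λ
    let hhat : EuclideanSpace ℝ (Fin n) → ℂ := fun w =>
      ∫ y, Complex.exp (-Complex.I * ((inner ℝ y w : ℝ) : ℂ)) * (h y : ℂ) ∂volume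
    (∫ y, ∫ z, k y z * (h y : ℂ) * (h z : ℂ) ∂volume ∂volume
        = ∫ w, ((‖hhat w‖ : ℝ) : ℂ) ^ 2 ∂Λ) ∧
    ((∫ y, ∫ z, k y z * (h y : ℂ) * (h z : ℂ) ∂volume ∂volume = 0) →
      h =ᵐ[volume] 0) := by
  intro k hhat
  have hk : ∀ y z : (EuclideanSpace ℝ (Fin n)), k y z = ∫ w, Complex.exp (-I * ((inner ℝ (y - z) w : ℝ) : ℂ)) ∂Λ :=
    fun _ _ => rfl
  have hh : ∀ w : (EuclideanSpace ℝ (Fin n)), hhat w = ∫ y, Complex.exp (-I * ((inner ℝ y w : ℝ) : ℂ)) * (h y : ℂ) :=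
    fun _ => rfl
  -- elementary exp facts
  have expsub : ∀ a b : ℝ, Complex.exp (-I * ((a - b : ℝ) : ℂ))
      = Complex.exp (-I * (a : ℂ)) * Complex.exp (I * (b : ℂ)) := by
    intro a b; rw [← Complex.exp_add]; congr 1; push_cast; ring
  have expnorm : ∀ a : ℝ, ‖Complex.exp (-I * (a : ℂ))‖ = 1 := by
    intro a
    rw [show -I * (a : ℂ) = ((-a : ℝ) : ℂ) * I by push_cast; ring]
    exact Complex.norm_exp_ofReal_mul_I _
  have expnorm' : ∀ a : ℝ, ‖Complex.exp (I * (a : ℂ))‖ = 1 := by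
    intro a
    rw [show I * (a : ℂ) = ((a : ℝ) : ℂ) * I by push_cast; ring]
    exact Complex.norm_exp_ofReal_mul_I _
  -- conjugate of hhat
  have hconj : ∀ w : (EuclideanSpace ℝ (Fin n)), (∫ z, Complex.exp (I * ((inner ℝ z w : ℝ) : ℂ)) * (h z : ℂ))
      = (starRingEnd ℂ) (hhat w) := by
    intro w
    rw [hh, ← integral_conj]
    refine integral_congr_ae (Eventually.of_forall fun z => ?_)
    dsimp only
    rw [map_mul, Complex.conj_ofReal, ← Complex.exp_conj]
    congr 2
    simp [map_mul, Complex.conj_ofReal]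
  -- relation with the Mathlib Fourier transform
  have hhat_eq : ∀ w : (EuclideanSpace ℝ (Fin n)), hhat w = 𝓕 (fun y => (h y : ℂ)) ((2 * π)⁻¹ • w) := by
    intro w
    rw [hh, Real.fourier_eq']
    refine integral_congr_ae (Eventually.of_forall fun v => ?_)
    dsimp only
    rw [smul_eq_mul]
    congr 1
    rw [real_inner_smul_right]
    rw [show -2 * π * ((2 * π)⁻¹ * (inner ℝ v w : ℝ)) = -(inner ℝ v w : ℝ) by
      field_simp]
    push_cast; ring
  have hcint : Integrable (fun y : (EuclideanSpace ℝ (Fin n)) => (h y : ℂ)) volume := hint.ofReal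
  have cont𝓕 : Continuous (𝓕 (fun y : (EuclideanSpace ℝ (Fin n)) => (h y : ℂ))) :=
    VectorFourier.fourierIntegral_continuous Real.continuous_fourierChar
      (by exact continuous_inner) hcint
  have hhat_cont : Continuous hhat := by
    rw [funext hhat_eq]
    exact cont𝓕.comp (continuous_const_smul _)
  -- bound for hhat
  set C : ℝ := ∫ y : (EuclideanSpace ℝ (Fin n)), ‖h y‖ with hCdef
  have hhat_bound : ∀ w : (EuclideanSpace ℝ (Fin n)), ‖hhat w‖ ≤ C := by
    intro w
    rw [hh]
    refine (norm_integral_le_integral_norm _).trans (le_of_eq ?_)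
    refine integral_congr_ae (Eventually.of_forall fun y => ?_)
    dsimp only
    rw [norm_mul, expnorm, one_mul, Complex.norm_real]
  -- inner swap, for each y
  have step1 : ∀ y : (EuclideanSpace ℝ (Fin n)), (∫ z, k y z * (h y : ℂ) * (h z : ℂ))
      = ∫ w, (Complex.exp (-I * ((inner ℝ y w : ℝ) : ℂ)) * (h y : ℂ))
          * (starRingEnd ℂ) (hhat w) ∂Λ := by
    intro y
    have e1 : ∀ z : (EuclideanSpace ℝ (Fin n)), k y z * (h y : ℂ) * (h z : ℂ)
        = ∫ w, (Complex.exp (-I * ((inner ℝ y w : ℝ) : ℂ)) * (h y : ℂ))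
            * (Complex.exp (I * ((inner ℝ z w : ℝ) : ℂ)) * (h z : ℂ)) ∂Λ := by
      intro z
      rw [mul_assoc, hk, ← integral_mul_const]
      refine integral_congr_ae (Eventually.of_forall fun w => ?_)
      dsimp only
      rw [inner_sub_left, expsub]
      ring
    have intF : Integrable (uncurry fun z w : (EuclideanSpace ℝ (Fin n)) =>
        (Complex.exp (-I * ((inner ℝ y w : ℝ) : ℂ)) * (h y : ℂ))
          * (Complex.exp (I * ((inner ℝ z w : ℝ) : ℂ)) * (h z : ℂ))) (volume.prod Λ) := by
      have mF : AEStronglyMeasurable (uncurry fun z w : (EuclideanSpace ℝ (Fin n)) =>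
          (Complex.exp (-I * ((inner ℝ y w : ℝ) : ℂ)) * (h y : ℂ))
            * (Complex.exp (I * ((inner ℝ z w : ℝ) : ℂ)) * (h z : ℂ))) (volume.prod Λ) := by
        apply AEStronglyMeasurable.mul
        · exact ((Complex.continuous_exp.comp (continuous_const.mul
            (Complex.continuous_ofReal.comp
              (continuous_const.inner continuous_snd)))).mul
                continuous_const).aestronglyMeasurable
        · exact ((Complex.continuous_exp.comp (continuous_const.mul
            (Complex.continuous_ofReal.comp
              (continuous_fst.inner continuous_snd)))).aestronglyMeasurable).mul
            ((Complex.measurable_ofReal.comp (hmeas.comp measurable_fst)).aestronglyMeasurable)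
      have intg : Integrable (fun p : (EuclideanSpace ℝ (Fin n)) × (EuclideanSpace ℝ (Fin n)) => (‖h y‖ * ‖h p.1‖) * (1 : ℝ)) (volume.prod Λ) :=
        (hint.norm.const_mul _).mul_prod (integrable_const 1)
      refine intg.mono' mF (Eventually.of_forall fun p => ?_)
      simp only [Function.uncurry, norm_mul, expnorm, expnorm', Complex.norm_real,
        norm_norm, one_mul, mul_one]
      exact le_of_eq (by ring)
    calc (∫ z, k y z * (h y : ℂ) * (h z : ℂ))
        = ∫ z, ∫ w, (Complex.exp (-I * ((inner ℝ y w : ℝ) : ℂ)) * (h y : ℂ))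
            * (Complex.exp (I * ((inner ℝ z w : ℝ) : ℂ)) * (h z : ℂ)) ∂Λ :=
          integral_congr_ae (Eventually.of_forall e1)
      _ = ∫ w, ∫ z, (Complex.exp (-I * ((inner ℝ y w : ℝ) : ℂ)) * (h y : ℂ))
            * (Complex.exp (I * ((inner ℝ z w : ℝ) : ℂ)) * (h z : ℂ)) ∂volume ∂Λ :=
          integral_integral_swap intF
      _ = ∫ w, (Complex.exp (-I * ((inner ℝ y w : ℝ) : ℂ)) * (h y : ℂ))
            * (starRingEnd ℂ) (hhat w) ∂Λ := by
          refine integral_congr_ae (Eventually.of_forall fun w => ?_)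
          dsimp only
          rw [integral_const_mul, hconj]
  -- outer swap
  have intG : Integrable (uncurry fun y w : (EuclideanSpace ℝ (Fin n)) =>
      (Complex.exp (-I * ((inner ℝ y w : ℝ) : ℂ)) * (h y : ℂ))
        * (starRingEnd ℂ) (hhat w)) (volume.prod Λ) := by
    have mG : AEStronglyMeasurable (uncurry fun y w : (EuclideanSpace ℝ (Fin n)) =>
        (Complex.exp (-I * ((inner ℝ y w : ℝ) : ℂ)) * (h y : ℂ))
          * (starRingEnd ℂ) (hhat w)) (volume.prod Λ) := by
      apply AEStronglyMeasurable.mul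
      · exact ((Complex.continuous_exp.comp (continuous_const.mul
          (Complex.continuous_ofReal.comp
            (continuous_fst.inner continuous_snd)))).aestronglyMeasurable).mul
          ((Complex.measurable_ofReal.comp (hmeas.comp measurable_fst)).aestronglyMeasurable)
      · exact (Complex.continuous_conj.comp (hhat_cont.comp continuous_snd)).aestronglyMeasurable
    have intg : Integrable (fun p : (EuclideanSpace ℝ (Fin n)) × (EuclideanSpace ℝ (Fin n)) => ‖h p.1‖ * (if True then C else C)) (volume.prod Λ) :=
      hint.norm.mul_prod (integrable_const _)
    refine intg.mono' mG (Eventually.of_forall fun p => ?_)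
    simp only [Function.uncurry, norm_mul, expnorm, Complex.norm_real, norm_norm,
      one_mul, mul_one, RCLike.norm_conj, if_true]
    exact mul_le_mul_of_nonneg_left (hhat_bound _) (norm_nonneg _)
  have part1 : (∫ y, ∫ z, k y z * (h y : ℂ) * (h z : ℂ))
      = ∫ w, ((‖hhat w‖ : ℝ) : ℂ) ^ 2 ∂Λ := by
    calc (∫ y, ∫ z, k y z * (h y : ℂ) * (h z : ℂ))
        = ∫ y, ∫ w, (Complex.exp (-I * ((inner ℝ y w : ℝ) : ℂ)) * (h y : ℂ))
            * (starRingEnd ℂ) (hhat w) ∂Λ := integral_congr_ae (Eventually.of_forall step1)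
      _ = ∫ w, ∫ y, (Complex.exp (-I * ((inner ℝ y w : ℝ) : ℂ)) * (h y : ℂ))
            * (starRingEnd ℂ) (hhat w) ∂volume ∂Λ := integral_integral_swap intG
      _ = ∫ w, hhat w * (starRingEnd ℂ) (hhat w) ∂Λ := by
          refine integral_congr_ae (Eventually.of_forall fun w => ?_)
          dsimp only
          rw [integral_mul_const, ← hh]
      _ = ∫ w, ((‖hhat w‖ : ℝ) : ℂ) ^ 2 ∂Λ := by
          refine integral_congr_ae (Eventually.of_forall fun w => ?_)
          dsimp only
          rw [Complex.mul_conj, Complex.normSq_eq_norm_sq]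
          push_cast; ring
  refine ⟨part1, fun hzero => ?_⟩
  rw [part1] at hzero
  have int_abs : Integrable (fun w => (‖hhat w‖) ^ 2) Λ := by
    refine (integrable_const (C ^ 2)).mono'
      (((hhat_cont.norm).pow 2).aestronglyMeasurable)
      (Eventually.of_forall fun w => ?_)
    rw [Real.norm_eq_abs, _root_.abs_of_nonneg (by positivity)]
    have h1 : ‖hhat w‖ ≤ C := by
      exact hhat_bound w
    exact pow_le_pow_left₀ (by positivity) h1 2
  -- the real integral vanishes
  have hzero' : ∫ w, (‖hhat w‖) ^ 2 ∂Λ = 0 := by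
    have h2 : ((∫ w, (‖hhat w‖) ^ 2 ∂Λ : ℝ) : ℂ) = 0 := by
      rw [show (((∫ w, (‖hhat w‖) ^ 2 ∂Λ : ℝ)) : ℂ)
          = Complex.ofRealCLM (∫ w, (‖hhat w‖) ^ 2 ∂Λ) from rfl,
        ← ContinuousLinearMap.integral_comp_comm _ int_abs, ← hzero]
      refine integral_congr_ae (Eventually.of_forall fun w => ?_)
      simp only [Complex.ofRealCLM_apply]
      push_cast; ring
    exact_mod_cast h2
  have habs0 : (fun w => (‖hhat w‖) ^ 2) =ᵐ[Λ] 0 :=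
    (integral_eq_zero_iff_of_nonneg (fun w => by positivity) int_abs).mp hzero'
  have hhat_ae : hhat =ᵐ[Λ] (fun _ => (0 : ℂ)) := by
    filter_upwards [habs0] with w hw
    have : ‖hhat w‖ = 0 := by
      have := hw
      simp only [Pi.zero_apply] at this
      nlinarith [norm_nonneg (hhat w)]
    exact norm_eq_zero.mp this
  haveI : Λ.IsOpenPosMeasure := ⟨fun U hU hne => (hsupp U hU hne).ne'⟩
  have hhat_zero : hhat = fun _ => (0 : ℂ) :=
    (hhat_cont.ae_eq_iff_eq Λ continuous_const).mp hhat_ae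
  have F0 : ∀ ξ : (EuclideanSpace ℝ (Fin n)), 𝓕 (fun y => (h y : ℂ)) ξ = 0 := by
    intro ξ
    have := hhat_eq ((2 * π) • ξ)
    rw [hhat_zero] at this
    rw [smul_smul, inv_mul_cancel₀ (by positivity : (2 * π : ℝ) ≠ 0), one_smul] at this
    exact this.symm
  have := fourier_inj hcint F0
  filter_upwards [this] with y hy
  simp only [Pi.zero_apply] at hy
  exact_mod_cast hy
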